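/- Let G be a simple graph with n vertices, m ≥ 1 edges and maximum degree Δ. If Δ ≥ 4m/n − 1, then the largest singular value of the LI-matrix of G equals μ₁(G) − 2m/n, i.e. σ₁(LI(G)) = μ₁(G) − 2m/n. -/

import Mathlib

open Finset SimpleGraph Matrix

attribute [local instance] Classical.propDecidable

/-- The `i`-th largest value of the tuple `f` (values sorted in non-increasing order). -/
noncomputable def sortDesc {n : ℕ} (f : Fin n → ℝ) : Fin n → ℝ :=
  fun i => f (Tuple.sort f i.rev)

/-- The Laplacian eigenvalues of `G`, in non-increasing order:
`lapEig G 0 = μ₁ ≥ lapEig G 1 = μ₂ ≥ ⋯`. -/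
noncomputable def lapEig {n : ℕ} (G : SimpleGraph (Fin n)) : Fin n → ℝ :=
  sortDesc (SimpleGraph.posSemidef_lapMatrix ℝ G).isHermitian.eigenvalues

/-- The number of edges of `G`. -/
noncomputable def numEdges {n : ℕ} (G : SimpleGraph (Fin n)) : ℕ :=
  G.edgeFinset.card

/-- The singular values of the LI-matrix `LI(G) = L(G) - (2m/n)·Iₙ`, in non-increasing
order; they are the values `|μᵢ - 2m/n|` sorted non-increasingly. -/
noncomputable def LIsv {n : ℕ} (G : SimpleGraph (Fin n)) : Fin n → ℝ :=
  sortDesc (fun i => |lapEig G i - 2 * numEdges G / n|)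

/-- The Ky Fan `k`-norm of the LI-matrix of `G`: the sum of the `k` largest singular
values of `LI(G)`. -/
noncomputable def kyFanLI {n : ℕ} (G : SimpleGraph (Fin n)) (k : ℕ) : ℝ :=
  ∑ i ∈ Finset.univ.filter (fun i : Fin n => (i : ℕ) < k), LIsv G i

/-- `S_k(L(G))`, the sum of the `k` largest Laplacian eigenvalues of `G`. -/
noncomputable def lapSum {n : ℕ} (G : SimpleGraph (Fin n)) (k : ℕ) : ℝ :=
  ∑ i ∈ Finset.univ.filter (fun i : Fin n => (i : ℕ) < k), lapEig G i

lemma sortDescMax {n : ℕ} (hn : 0 < n) (f : Fin n → ℝ) (i : Fin n) :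
    f i ≤ sortDesc f ⟨0, hn⟩ := by
  have hle : (Tuple.sort f).symm i ≤ Fin.rev ⟨0, hn⟩ := by
    rw [Fin.le_def]
    have := ((Tuple.sort f).symm i).is_lt
    simp [Fin.rev]
    omega
  have h := Tuple.monotone_sort f hle
  simp only [Function.comp_apply, Equiv.apply_symm_apply] at h
  exact h

lemma quadBound {n : ℕ} (A : Matrix (Fin n) (Fin n) ℝ) (hA : A.IsHermitian) (c : ℝ)
    (hc : ∀ i, hA.eigenvalues i ≤ c) (x : Fin n → ℝ) :
    x ⬝ᵥ (A *ᵥ x) ≤ c * (x ⬝ᵥ x) := by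
  set U : Matrix (Fin n) (Fin n) ℝ := (hA.eigenvectorUnitary : Matrix (Fin n) (Fin n) ℝ) with hU
  set y : Fin n → ℝ := star U *ᵥ x with hy
  have hxy : x ᵥ* U = y := by
    rw [hy, hU]
    rw [show (star (hA.eigenvectorUnitary : Matrix (Fin n) (Fin n) ℝ)) = (hA.eigenvectorUnitary : Matrix (Fin n) (Fin n) ℝ)ᵀ from rfl]
    rw [mulVec_transpose]
  have h1 : x ⬝ᵥ (A *ᵥ x) = ∑ i, hA.eigenvalues i * (y i)^2 := by
    conv_lhs => rw [hA.spectral_theorem, Unitary.conjStarAlgAut_apply]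
    rw [← mulVec_mulVec, ← mulVec_mulVec, dotProduct_mulVec, hxy]
    simp only [dotProduct, mulVec_diagonal, Function.comp_apply, RCLike.ofReal_real_eq_id, id_eq]
    congr 1; ext i; ring
  have h2 : x ⬝ᵥ x = ∑ i, (y i)^2 := by
    have h3 : y ⬝ᵥ y = x ⬝ᵥ x := by
      calc y ⬝ᵥ y = (x ᵥ* U) ⬝ᵥ (star U *ᵥ x) := by rw [hxy, ← hy]
        _ = x ⬝ᵥ (U *ᵥ (star U *ᵥ x)) := (dotProduct_mulVec _ _ _).symm
        _ = x ⬝ᵥ x := by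
            rw [mulVec_mulVec,
              show (U * star U) = 1 from Unitary.coe_mul_star_self hA.eigenvectorUnitary,
              one_mulVec]
    rw [← h3]
    simp [dotProduct, pow_two]
  rw [h1, h2, Finset.mul_sum]
  exact Finset.sum_le_sum fun i _ => mul_le_mul_of_nonneg_right (hc i) (sq_nonneg _)

-- key lemma: μ₁ ≥ Δ + 1
lemma mu_ge {n : ℕ} (hn : 0 < n) (G : SimpleGraph (Fin n)) (hm : 1 ≤ numEdges G) :
    (G.maxDegree : ℝ) + 1 ≤ lapEig G ⟨0, hn⟩ := by
  classical
  have hne : Nonempty (Fin n) := ⟨⟨0, hn⟩⟩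
  set eig := (SimpleGraph.posSemidef_lapMatrix ℝ G).isHermitian.eigenvalues with heig
  set c : ℝ := lapEig G ⟨0, hn⟩ with hc
  have hcmax : ∀ j, eig j ≤ c := fun j => sortDescMax hn eig j
  -- max degree vertex
  obtain ⟨v, hv⟩ := G.exists_maximal_degree_vertex
  set d : ℕ := G.maxDegree with hd
  -- d ≥ 1
  have hd1 : 1 ≤ d := by
    obtain ⟨e, he⟩ := Finset.card_pos.mp hm
    induction e with
    | _ a b =>
      rw [mem_edgeFinset, mem_edgeSet] at he
      calc 1 ≤ G.degree a := by
              rw [Nat.one_le_iff_ne_zero, ← Nat.pos_iff_ne_zero, G.degree_pos_iff_exists_adj]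
              exact ⟨b, he⟩
        _ ≤ d := G.degree_le_maxDegree a
  set x : Fin n → ℝ := fun u => if u = v then (d : ℝ) else if G.Adj v u then -1 else 0 with hx
  set t : Fin n → Fin n → ℝ := fun i j => if G.Adj i j then (x i - x j)^2 else 0 with ht
  have htnn : ∀ i j, 0 ≤ t i j := by intro i j; simp only [ht]; positivity
  have htv : ∀ j, t v j = if G.Adj v j then ((d : ℝ)+1)^2 else 0 := by
    intro j
    simp only [ht, hx]
    by_cases h : G.Adj v j
    · have hjv : j ≠ v := (G.ne_of_adj h).symm
      simp [h, hjv]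
    · simp [h]
  have htv' : ∀ i, t i v = if G.Adj v i then ((d : ℝ)+1)^2 else 0 := by
    intro i
    simp only [ht, hx]
    by_cases h : G.Adj i v
    · have hiv : i ≠ v := G.ne_of_adj h
      simp [h, hiv, G.adj_symm h]
      ring_nf
    · simp only [h, if_false]
      rw [if_neg (fun hh => h (G.adj_symm hh))]
  have hdeg : ∀ (f : Fin n → ℝ) (w : Fin n), (∀ j, f j = if G.Adj w j then ((d:ℝ)+1)^2 else 0) →
      ∑ j, f j = (G.degree w : ℝ) * ((d:ℝ)+1)^2 := by
    intro f w hf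
    rw [degree_eq_sum_if_adj, Finset.sum_mul]
    refine Finset.sum_congr rfl fun j _ => ?_
    rw [hf j]; split_ifs <;> ring
  have hsum1 : ∑ j, t v j = (d : ℝ) * ((d:ℝ)+1)^2 := by
    rw [hdeg (t v) v htv, hv]
  have hquad : (d : ℝ) * ((d:ℝ)+1)^2 ≤ x ⬝ᵥ (G.lapMatrix ℝ *ᵥ x) := by
    have hform : x ⬝ᵥ (G.lapMatrix ℝ *ᵥ x) = (∑ i, ∑ j, t i j) / 2 := by
      rw [← Matrix.toLinearMap₂'_apply', lapMatrix_toLinearMap₂']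
    rw [hform]
    rw [le_div_iff₀ (by norm_num : (0:ℝ) < 2)]
    -- ∑∑ t ≥ 2 * d * (d+1)^2
    have h1 : ∀ i : Fin n, i ≠ v → t i v ≤ ∑ j, t i j :=
      fun i _ => Finset.single_le_sum (fun j _ => htnn i j) (Finset.mem_univ v)
    have h2 : ∑ i ∈ Finset.univ.erase v, t i v ≤ ∑ i ∈ Finset.univ.erase v, ∑ j, t i j :=
      Finset.sum_le_sum fun i hi => h1 i (Finset.ne_of_mem_erase hi)
    have h3 : ∑ i ∈ Finset.univ.erase v, t i v = (d : ℝ) * ((d:ℝ)+1)^2 := by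
      have : ∑ i ∈ Finset.univ.erase v, t i v = ∑ i, t i v := by
        apply Finset.sum_erase
        simp [ht]
      rw [this, hdeg (fun i => t i v) v htv', hv]
    have h4 : ∑ i, ∑ j, t i j = (∑ j, t v j) + ∑ i ∈ Finset.univ.erase v, ∑ j, t i j := by
      rw [← Finset.add_sum_erase _ _ (Finset.mem_univ v)]
    rw [h4, hsum1]
    linarith
  -- x ⬝ᵥ x = d^2 + d
  have hxx : x ⬝ᵥ x = (d:ℝ)^2 + (d:ℝ) := by
    have hterm : ∀ i, x i * x i = if i = v then (d:ℝ)^2 else if G.Adj v i then 1 else 0 := by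
      intro i; simp only [hx]; split_ifs <;> ring
    rw [show x ⬝ᵥ x = ∑ i, x i * x i from rfl, Finset.sum_congr rfl fun i _ => hterm i,
      ← Finset.add_sum_erase _ _ (Finset.mem_univ v), if_pos rfl]
    congr 1
    have h5 : ∑ i ∈ Finset.univ.erase v, (if i = v then (d:ℝ)^2 else if G.Adj v i then 1 else 0)
        = ∑ i ∈ Finset.univ.erase v, (if G.Adj v i then (1:ℝ) else 0) := by
      refine Finset.sum_congr rfl fun i hi => ?_
      rw [if_neg (Finset.ne_of_mem_erase hi)]
    rw [h5, Finset.sum_erase _ (by simp), ← degree_eq_sum_if_adj, hv]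
  have hR := quadBound (G.lapMatrix ℝ) (SimpleGraph.posSemidef_lapMatrix ℝ G).isHermitian c hcmax x
  have hd1R : (1:ℝ) ≤ (d:ℝ) := by exact_mod_cast hd1
  rw [hxx] at hR
  nlinarith [hquad.trans hR]


/-- If `G` is a simple graph with `n` vertices, `m ≥ 1` edges and maximum
degree `Δ ≥ 4m/n - 1`, then `σ₁(LI(G)) = μ₁(G) - 2m/n`. -/
theorem stmt_1 {n : ℕ} (hn : 0 < n) (G : SimpleGraph (Fin n))
    (hm : 1 ≤ numEdges G)
    (hdel : 4 * (numEdges G : ℝ) / n - 1 ≤ (G.maxDegree : ℝ)) :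
    LIsv G ⟨0, hn⟩ = lapEig G ⟨0, hn⟩ - 2 * (numEdges G : ℝ) / n := by
  set c2 : ℝ := 2 * (numEdges G : ℝ) / n with hc2
  have hc2nn : 0 ≤ c2 := by positivity
  set g : Fin n → ℝ := fun i => |lapEig G i - c2| with hg
  have hmu : ∀ i, lapEig G i ≤ lapEig G ⟨0, hn⟩ := fun i =>
    sortDescMax hn (SimpleGraph.posSemidef_lapMatrix ℝ G).isHermitian.eigenvalues _
  have hmu0 : ∀ i, 0 ≤ lapEig G i := fun i =>
    (SimpleGraph.posSemidef_lapMatrix ℝ G).eigenvalues_nonneg _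
  have hbig : 2 * c2 ≤ lapEig G ⟨0, hn⟩ := by
    have h1 := mu_ge hn G hm
    have : 2 * c2 = 4 * (numEdges G : ℝ) / n := by rw [hc2]; ring
    linarith
  have hupper : LIsv G ⟨0, hn⟩ ≤ lapEig G ⟨0, hn⟩ - c2 := by
    show g (Tuple.sort g (Fin.rev ⟨0, hn⟩)) ≤ _
    set j0 := Tuple.sort g (Fin.rev ⟨0, hn⟩)
    rw [hg]
    rw [abs_le]
    constructor
    · have := hmu0 j0; linarith
    · have := hmu j0; linarith
  have hlower : lapEig G ⟨0, hn⟩ - c2 ≤ LIsv G ⟨0, hn⟩ := by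
    have h : g ⟨0, hn⟩ ≤ LIsv G ⟨0, hn⟩ := sortDescMax hn g ⟨0, hn⟩
    have hgv : g ⟨0, hn⟩ = lapEig G ⟨0, hn⟩ - c2 := by
      show |lapEig G ⟨0, hn⟩ - c2| = _
      exact abs_of_nonneg (by linarith)
    rw [hgv] at h
    exact h
  linarith
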